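/- Suppose C : X → ℝ is convex on a compact interval X and G : [0,E] → ℝ is convex, and for each s let x̂(s) be a minimizer of x ↦ C(x) + G(s+x) over {x ∈ X : s+x ∈ [0,E]}. Then minimizers can be selected so that x̂(s) is nonincreasing in s and s + x̂(s) is nondecreasing in s. Precisely: if s₁ ≤ s₂ and x₁ minimizes for s₁, then there exists a minimizer x₂ for s₂ with x₂ ≤ x₁ and s₂ + x₂ ≥ s₁ + x₁. -/

import Mathlib

open Set

lemma quad_ineq {S : Set ℝ} {f : ℝ → ℝ} (hf : ConvexOn ℝ S f) {u x y v : ℝ}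
    (hu : u ∈ S) (hv : v ∈ S) (hux : u ≤ x) (huy : u ≤ y) (hxy : x + y = u + v) :
    f x + f y ≤ f u + f v := by
  have huv : u ≤ v := by linarith
  rcases eq_or_lt_of_le huv with h | h
  · have hx : x = u := le_antisymm (by linarith) hux
    have hy : y = v := by linarith
    rw [hx, hy]
  · have hc : (0:ℝ) < v - u := by linarith
    set a : ℝ := (v - x) / (v - u) with ha
    set b : ℝ := (x - u) / (v - u) with hb
    have ha0 : 0 ≤ a := div_nonneg (by linarith) (by linarith)
    have hb0 : 0 ≤ b := div_nonneg (by linarith) (by linarith)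
    have hab : a + b = 1 := by
      rw [ha, hb, ← add_div, show v - x + (x - u) = v - u by ring]
      exact div_self (by linarith)
    have hxc : a • u + b • v = x := by
      rw [smul_eq_mul, smul_eq_mul, ha, hb]; field_simp; ring
    have hyc : b • u + a • v = y := by
      rw [smul_eq_mul, smul_eq_mul, ha, hb]; field_simp; nlinarith [hxy]
    have h1 := hf.2 hu hv ha0 hb0 hab
    have h2 := hf.2 hu hv hb0 ha0 (by linarith)
    rw [hxc] at h1
    rw [hyc] at h2
    simp only [smul_eq_mul] at h1 h2
    have key : a * f u + b * f v + (b * f u + a * f v) = f u + f v := by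
      have hb1 : b = 1 - a := by linarith
      rw [hb1]; ring
    linarith

/-- Monotone comparative statics of minimizers in the storage dynamic program step. -/
theorem stmt2 (PO PI E : ℝ) (hPO : 0 ≤ PO) (hPI : 0 ≤ PI) (hE : 0 < E)
    (C G : ℝ → ℝ)
    (hC : ConvexOn ℝ (Icc (-PO) PI) C) (hCc : ContinuousOn C (Icc (-PO) PI))
    (hG : ConvexOn ℝ (Icc 0 E) G) (hGc : ContinuousOn G (Icc 0 E))
    (s₁ s₂ : ℝ) (hs : s₁ ≤ s₂)
    (x₁ : ℝ) (hx₁ : x₁ ∈ Icc (-PO) PI) (hx₁' : s₁ + x₁ ∈ Icc 0 E)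
    (hmin₁ : ∀ x ∈ Icc (-PO) PI, s₁ + x ∈ Icc 0 E →
      C x₁ + G (s₁ + x₁) ≤ C x + G (s₁ + x))
    (hfeas₂ : ∃ x ∈ Icc (-PO) PI, s₂ + x ∈ Icc 0 E) :
    ∃ x₂ ∈ Icc (-PO) PI, s₂ + x₂ ∈ Icc 0 E ∧
      (∀ x ∈ Icc (-PO) PI, s₂ + x ∈ Icc 0 E → C x₂ + G (s₂ + x₂) ≤ C x + G (s₂ + x)) ∧
      x₂ ≤ x₁ ∧ s₁ + x₁ ≤ s₂ + x₂ := by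
  obtain ⟨xf, hxf, hxf'⟩ := hfeas₂
  obtain ⟨hxf1, hxf2⟩ := hxf
  obtain ⟨hxf3, hxf4⟩ := hxf'
  obtain ⟨hx₁1, hx₁2⟩ := hx₁
  obtain ⟨hx₁'1, hx₁'2⟩ := hx₁'
  set a : ℝ := max (max (-PO) (-s₂)) (s₁ + x₁ - s₂) with ha
  set b : ℝ := min (min PI (E - s₂)) x₁ with hb
  have hab : a ≤ b := by
    refine max_le (max_le ?_ ?_) ?_ <;> refine le_min (le_min ?_ ?_) ?_ <;> linarith
  -- membership characterization
  have hmem : ∀ z ∈ Icc a b, z ∈ Icc (-PO) PI ∧ s₂ + z ∈ Icc 0 E ∧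
      s₁ + x₁ - s₂ ≤ z ∧ z ≤ x₁ := by
    intro z hz
    obtain ⟨hz1, hz2⟩ := hz
    have h1 : -PO ≤ z := le_trans (le_trans (le_max_left _ _) (le_max_left _ _)) hz1
    have h2 : -s₂ ≤ z := le_trans (le_trans (le_max_right _ _) (le_max_left _ _)) hz1
    have h3 : s₁ + x₁ - s₂ ≤ z := le_trans (le_max_right _ _) hz1
    have h4 : z ≤ PI := le_trans hz2 (le_trans (min_le_left _ _) (min_le_left _ _))
    have h5 : z ≤ E - s₂ := le_trans hz2 (le_trans (min_le_left _ _) (min_le_right _ _))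
    have h6 : z ≤ x₁ := le_trans hz2 (min_le_right _ _)
    exact ⟨⟨h1, h4⟩, ⟨by linarith, by linarith⟩, h3, h6⟩
  -- continuity of the objective on Icc a b
  have hsub1 : Icc a b ⊆ Icc (-PO) PI := fun z hz => (hmem z hz).1
  have hcont : ContinuousOn (fun x => C x + G (s₂ + x)) (Icc a b) := by
    apply ContinuousOn.add (hCc.mono hsub1)
    apply hGc.comp (continuousOn_const.add continuousOn_id)
    intro z hz
    exact (hmem z hz).2.1
  obtain ⟨x₂, hx₂K, hx₂min⟩ :=
    isCompact_Icc.exists_isMinOn (nonempty_Icc.mpr hab) hcont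
  obtain ⟨hx₂X, hx₂E, hx₂lb, hx₂ub⟩ := hmem x₂ hx₂K
  refine ⟨x₂, hx₂X, hx₂E, ?_, hx₂ub, by linarith [hx₂lb]⟩
  intro x hx hx'
  obtain ⟨hxX1, hxX2⟩ := hx
  obtain ⟨hxE1, hxE2⟩ := hx'
  -- case analysis
  by_cases hcase1 : x ≤ x₁
  · by_cases hcase2 : s₁ + x₁ - s₂ ≤ x
    · -- x is in Icc a b
      have hxab : x ∈ Icc a b := by
        constructor
        · apply max_le (max_le (by linarith) (by linarith)) (by linarith)
        · exact le_min (le_min (by linarith) (by linarith)) hcase1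
      exact hx₂min hxab
    · -- case B: s₂ + x < s₁ + x₁; compare with x' = s₁ + x₁ - s₂
      push_neg at hcase2
      set x' : ℝ := s₁ + x₁ - s₂ with hx'def
      set y : ℝ := x + s₂ - s₁ with hydef
      have hyX : y ∈ Icc (-PO) PI := ⟨by linarith, by linarith⟩
      have hyE : s₁ + y ∈ Icc 0 E := ⟨by linarith, by linarith⟩
      have hm := hmin₁ y hyX hyE
      -- C x₁ + G (s₁+x₁) ≤ C y + G (s₂+x)  (since s₁+y = s₂+x)
      have hsy : s₁ + y = s₂ + x := by ring
      rw [hsy] at hm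
      -- convexity of C: C x' + C y ≤ C x + C x₁  (x ≤ x', y ≤ x₁, x'+y = x+x₁)
      have hCq : C x' + C y ≤ C x + C x₁ :=
        quad_ineq hC ⟨by linarith, by linarith⟩ ⟨hx₁1, hx₁2⟩
          (by linarith) (by linarith) (by ring)
      -- x' is in Icc a b
      have hx'ab : x' ∈ Icc a b := by
        constructor
        · apply max_le (max_le (by linarith) (by linarith)) (by linarith)
        · exact le_min (le_min (by linarith) (by linarith)) (by linarith)
      have hmin' := hx₂min hx'ab
      simp only at hmin'
      have hsx' : s₂ + x' = s₁ + x₁ := by ring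
      calc C x₂ + G (s₂ + x₂) ≤ C x' + G (s₂ + x') := hmin'
        _ = C x' + G (s₁ + x₁) := by rw [hsx']
        _ ≤ C x + G (s₂ + x) := by linarith
  · -- case A: x > x₁; compare with x₁
    push_neg at hcase1
    have hx₁E2 : s₂ + x₁ ≤ E := by linarith
    have hx₁E : s₂ + x₁ ∈ Icc 0 E := ⟨by linarith, hx₁E2⟩
    have hxfeas1 : s₁ + x ∈ Icc 0 E := ⟨by linarith, by linarith⟩
    have hm := hmin₁ x ⟨hxX1, hxX2⟩ hxfeas1
    -- convexity of G: G (s₁+x) + G (s₂+x₁) ≤ G (s₁+x₁) + G (s₂+x)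
    have hGq : G (s₁ + x) + G (s₂ + x₁) ≤ G (s₁ + x₁) + G (s₂ + x) :=
      quad_ineq hG ⟨by linarith, by linarith⟩ ⟨by linarith, by linarith⟩
        (by linarith) (by linarith) (by ring)
    have hx₁ab : x₁ ∈ Icc a b := by
      constructor
      · apply max_le (max_le (by linarith) (by linarith)) (by linarith)
      · exact le_min (le_min (by linarith) (by linarith)) le_rfl
    have hmin' := hx₂min hx₁ab
    simp only at hmin'
    calc C x₂ + G (s₂ + x₂) ≤ C x₁ + G (s₂ + x₁) := hmin'
      _ ≤ C x + G (s₂ + x) := by linarith
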